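/- For 1 ≤ s ≤ r < ∞, the Mazur map φ(f) = |f|^{r/s} sign(f), restricted to the closed unit ball of L^r(μ), is uniformly continuous as a map into L^s(μ). -/

import Mathlib

open MeasureTheory ENNReal

private lemma mz_pow_split {P x : ℝ} (hP : 1 ≤ P) (hx : 0 ≤ x) :
    x ^ P = x ^ (P - 1) * x := by
  rcases eq_or_lt_of_le hx with h | h
  · simp [← h, Real.zero_rpow (by linarith : P ≠ 0)]
  · rw [← Real.rpow_add_one h.ne', sub_add_cancel]

private lemma mz_bernoulli {P a b : ℝ} (hP : 1 ≤ P) (hb : 0 ≤ b) (hba : b ≤ a) :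
    a ^ P - b ^ P ≤ P * a ^ (P - 1) * (a - b) := by
  have ha : 0 ≤ a := hb.trans hba
  rcases eq_or_lt_of_le ha with h | h
  · have hb0 : b = 0 := le_antisymm (h ▸ hba) hb
    simp [← h, hb0, Real.zero_rpow (by linarith : P ≠ 0)]
  · have h1 : 1 + P * (b / a - 1) ≤ (b / a) ^ P := by
      have := one_add_mul_self_le_rpow_one_add
        (by have : 0 ≤ b / a := div_nonneg hb h.le; linarith) hP (s := b / a - 1)
      simpa using this
    have h2 : (b / a) ^ P = b ^ P / a ^ P := Real.div_rpow hb h.le P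
    have hA : 0 < a ^ P := Real.rpow_pos_of_pos h P
    have h4 : (1 + P * (b / a - 1)) * a ^ P ≤ b ^ P := by
      calc (1 + P * (b / a - 1)) * a ^ P ≤ (b ^ P / a ^ P) * a ^ P := by
            rw [← h2]; exact mul_le_mul_of_nonneg_right h1 hA.le
        _ = b ^ P := by field_simp
    have h3 : a ^ (P - 1) = a ^ P / a := by
      rw [Real.rpow_sub h, Real.rpow_one]
    rw [h3]
    have h5 : a ^ P - (1 + P * (b / a - 1)) * a ^ P = P * (a ^ P / a) * (a - b) := by
      field_simp; ring
    linarith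

private lemma mz_sign_nonneg {P x : ℝ} (hP : 1 ≤ P) (hx : 0 ≤ x) :
    |x| ^ P * Real.sign x = x ^ P := by
  rcases eq_or_lt_of_le hx with h | h
  · simp [← h, Real.sign_zero, Real.zero_rpow (by linarith : P ≠ 0)]
  · rw [abs_of_pos h, Real.sign_of_pos h, mul_one]

private lemma mz_key_nonneg {P a b : ℝ} (hP : 1 ≤ P) (ha : 0 ≤ a) (hb : 0 ≤ b) :
    |(|a| ^ P * Real.sign a) - (|b| ^ P * Real.sign b)| ≤
      P * ((|a| ^ (P - 1) + |b| ^ (P - 1)) * |a - b|) := by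
  rw [mz_sign_nonneg hP ha, mz_sign_nonneg hP hb, abs_of_nonneg ha, abs_of_nonneg hb]
  -- wlog b ≤ a
  rcases le_total b a with hba | hba
  · have h1 : b ^ P ≤ a ^ P := Real.rpow_le_rpow hb hba (by linarith)
    rw [abs_of_nonneg (by linarith), abs_of_nonneg (by linarith : (0:ℝ) ≤ a - b)]
    have h2 := mz_bernoulli hP hb hba
    have h3 : 0 ≤ b ^ (P - 1) := Real.rpow_nonneg hb _
    nlinarith [mul_nonneg (mul_nonneg (by linarith : (0:ℝ) ≤ P) h3) (by linarith : (0:ℝ) ≤ a - b)]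
  · have h1 : a ^ P ≤ b ^ P := Real.rpow_le_rpow ha hba (by linarith)
    rw [abs_sub_comm, abs_sub_comm a b]
    rw [abs_of_nonneg (by linarith), abs_of_nonneg (by linarith : (0:ℝ) ≤ b - a)]
    have h2 := mz_bernoulli hP ha hba
    have h3 : 0 ≤ a ^ (P - 1) := Real.rpow_nonneg ha _
    nlinarith [mul_nonneg (mul_nonneg (by linarith : (0:ℝ) ≤ P) h3) (by linarith : (0:ℝ) ≤ b - a)]

private lemma mz_key_opp {P a b : ℝ} (hP : 1 ≤ P) (ha : 0 ≤ a) (hb : b ≤ 0) :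
    |(|a| ^ P * Real.sign a) - (|b| ^ P * Real.sign b)| ≤
      P * ((|a| ^ (P - 1) + |b| ^ (P - 1)) * |a - b|) := by
  have hbs : |b| ^ P * Real.sign b = -((-b) ^ P) := by
    rcases eq_or_lt_of_le hb with h | h
    · simp [h, Real.sign_zero, Real.zero_rpow (by linarith : P ≠ 0)]
    · rw [abs_of_neg h, Real.sign_of_neg h, mul_neg_one]
  rw [mz_sign_nonneg hP ha, hbs, abs_of_nonneg ha, abs_of_nonpos hb, sub_neg_eq_add]
  have hnb : 0 ≤ -b := neg_nonneg.2 hb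
  have h1 : a ^ P = a ^ (P - 1) * a := mz_pow_split hP ha
  have h2 : (-b) ^ P = (-b) ^ (P - 1) * (-b) := mz_pow_split hP hnb
  have h3 : |a - b| = a + -b := by rw [abs_of_nonneg (by linarith)]; ring
  rw [abs_of_nonneg (by positivity), h1, h2, h3]
  have h4 : 0 ≤ a ^ (P - 1) := Real.rpow_nonneg ha _
  have h5 : 0 ≤ (-b) ^ (P - 1) := Real.rpow_nonneg hnb _
  nlinarith [mul_nonneg h4 hnb, mul_nonneg h5 ha,
    mul_nonneg (by linarith : (0:ℝ) ≤ P - 1) (mul_nonneg (add_nonneg h4 h5) (by linarith : (0:ℝ) ≤ a + -b))]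

private lemma mz_key {P : ℝ} (hP : 1 ≤ P) (a b : ℝ) :
    |(|a| ^ P * Real.sign a) - (|b| ^ P * Real.sign b)| ≤
      P * ((|a| ^ (P - 1) + |b| ^ (P - 1)) * |a - b|) := by
  rcases le_total 0 a with ha | ha <;> rcases le_total 0 b with hb | hb
  · exact mz_key_nonneg hP ha hb
  · exact mz_key_opp hP ha hb
  · have := mz_key_opp hP hb ha
    rw [abs_sub_comm] at this
    rw [abs_sub_comm a b, add_comm (|a| ^ (P - 1))]
    exact this
  · have := mz_key_nonneg hP (neg_nonneg.2 ha) (neg_nonneg.2 hb)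
    simp only [abs_neg, Real.sign_neg, mul_neg, neg_sub_neg] at this
    rw [abs_sub_comm, abs_sub_comm a b]
    exact this

private lemma mz_sign_abs (x : ℝ) : Real.sign x * |x| = x := by
  rcases lt_trichotomy x 0 with h | h | h
  · rw [Real.sign_of_neg h, abs_of_neg h]; ring
  · simp [h]
  · rw [Real.sign_of_pos h, abs_of_pos h, one_mul]

/-- For `1 ≤ s ≤ r < ∞` the Mazur map is uniformly continuous on the unit ball of `L^r(μ)`. -/
theorem stmt_4 {Ω : Type*} [MeasurableSpace Ω] (μ : Measure Ω) (r s : ℝ)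
    (hs : 1 ≤ s) (hsr : s ≤ r)
    [Fact (1 ≤ ENNReal.ofReal r)] [Fact (1 ≤ ENNReal.ofReal s)]
    (φ : Lp ℝ (ENNReal.ofReal r) μ → Lp ℝ (ENNReal.ofReal s) μ)
    (hφ : ∀ f : Lp ℝ (ENNReal.ofReal r) μ,
      (φ f : Ω → ℝ) =ᵐ[μ] fun ω => |f ω| ^ (r / s) * Real.sign (f ω)) :
    UniformContinuousOn φ (Metric.closedBall 0 1) := by
  have hs0 : 0 < s := by linarith
  have hr0 : 0 < r := by linarith
  rcases eq_or_lt_of_le hsr with heq | hlt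
  · -- case s = r : φ coincides a.e. with the identity
    subst heq
    refine LipschitzOnWith.uniformContinuousOn (K := 1) ?_
    intro f _ g _
    have hid : ∀ h : Lp ℝ (ENNReal.ofReal s) μ, (φ h : Ω → ℝ) =ᵐ[μ] h := by
      intro h
      refine (hφ h).trans (Filter.Eventually.of_forall fun ω => ?_)
      simp only [div_self hs0.ne', Real.rpow_one]
      rw [mul_comm, mz_sign_abs]
    calc edist (φ f) (φ g)
        = eLpNorm (⇑(φ f) - ⇑(φ g)) (ENNReal.ofReal s) μ := Lp.edist_def _ _
      _ = eLpNorm (⇑f - ⇑g) (ENNReal.ofReal s) μ :=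
          eLpNorm_congr_ae ((hid f).sub (hid g))
      _ = edist f g := (Lp.edist_def _ _).symm
      _ ≤ 1 * edist f g := by rw [one_mul]
  · -- main case s < r
    have hrs : 0 < r - s := by linarith
    set P : ℝ := r / s with hPdef
    have hP : 1 < P := (one_lt_div hs0).mpr hlt
    have hP1 : (1:ℝ) ≤ P := hP.le
    set q : ℝ≥0∞ := ENNReal.ofReal (r * s / (r - s)) with hqdef
    have hq1 : 1 ≤ q := by
      rw [hqdef, ENNReal.one_le_ofReal, le_div_iff₀ hrs]
      nlinarith
    have hpqr : 1 / ENNReal.ofReal s = 1 / q + 1 / ENNReal.ofReal r := by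
      rw [hqdef, one_div, one_div, one_div, ← ENNReal.ofReal_inv_of_pos hs0,
        ← ENNReal.ofReal_inv_of_pos hr0, ← ENNReal.ofReal_inv_of_pos (by positivity),
        ← ENNReal.ofReal_add (by positivity) (by positivity)]
      congr 1
      field_simp
      ring
    have hqP : q * ENNReal.ofReal (P - 1) = ENNReal.ofReal r := by
      rw [hqdef, ← ENNReal.ofReal_mul (by positivity)]
      congr 1
      rw [hPdef]
      field_simp
    -- the power-weight estimate on the unit ball
    have hwt : ∀ f : Lp ℝ (ENNReal.ofReal r) μ, f ∈ Metric.closedBall 0 1 →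
        eLpNorm (fun ω => |f ω| ^ (P - 1)) q μ ≤ 1 := by
      intro f hf
      have hfr : eLpNorm (⇑f) (ENNReal.ofReal r) μ ≤ 1 := by
        have h1 : ‖f‖₊ ≤ 1 := by
          rw [← NNReal.coe_le_coe]
          simpa using mem_closedBall_zero_iff.mp hf
        calc eLpNorm (⇑f) (ENNReal.ofReal r) μ = (‖f‖₊ : ℝ≥0∞) := by
              rw [Lp.nnnorm_def, ENNReal.coe_toNNReal (Lp.eLpNorm_ne_top f)]
          _ ≤ 1 := by exact_mod_cast h1
      have := eLpNorm_norm_rpow (⇑f) (q := P - 1) (p := q) (μ := μ) (by linarith)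
      simp only [Real.norm_eq_abs] at this
      rw [this, hqP]
      exact ENNReal.rpow_le_one hfr (by linarith)
    have hmes : ∀ f : Lp ℝ (ENNReal.ofReal r) μ,
        AEStronglyMeasurable (fun ω => |f ω| ^ (P - 1)) μ := fun f =>
      ((Real.continuous_rpow_const (by linarith : (0:ℝ) ≤ P - 1)).comp
        continuous_abs).comp_aestronglyMeasurable (Lp.aestronglyMeasurable f)
    refine LipschitzOnWith.uniformContinuousOn (K := Real.toNNReal (2 * P)) ?_
    intro f hf g hg
    set K : Ω → ℝ := fun ω => P * (|f ω| ^ (P - 1) + |g ω| ^ (P - 1)) with hKdef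
    have hKm : AEStronglyMeasurable K μ :=
      (aestronglyMeasurable_const.mul ((hmes f).add (hmes g)) : _)
    have hFGm : AEStronglyMeasurable (⇑f - ⇑g) μ :=
      (Lp.aestronglyMeasurable f).sub (Lp.aestronglyMeasurable g)
    -- step 1: pointwise bound
    have step1 : eLpNorm (⇑(φ f) - ⇑(φ g)) (ENNReal.ofReal s) μ ≤
        eLpNorm (fun ω => K ω * ((⇑f - ⇑g) ω)) (ENNReal.ofReal s) μ := by
      apply eLpNorm_mono_ae
      filter_upwards [hφ f, hφ g] with ω h1 h2
      have hK0 : 0 ≤ K ω := by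
        have := Real.rpow_nonneg (abs_nonneg (f ω)) (P - 1)
        have := Real.rpow_nonneg (abs_nonneg (g ω)) (P - 1)
        rw [hKdef]
        positivity
      calc ‖(⇑(φ f) - ⇑(φ g)) ω‖
          = |(|f ω| ^ P * Real.sign (f ω)) - (|g ω| ^ P * Real.sign (g ω))| := by
            simp only [Pi.sub_apply, Real.norm_eq_abs, h1, h2]
        _ ≤ P * ((|f ω| ^ (P - 1) + |g ω| ^ (P - 1)) * |f ω - g ω|) := mz_key hP1 _ _
        _ = K ω * |(⇑f - ⇑g) ω| := by rw [hKdef]; simp [Pi.sub_apply]; ring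
        _ = ‖K ω * ((⇑f - ⇑g) ω)‖ := by
            rw [Real.norm_eq_abs, abs_mul, abs_of_nonneg hK0]
    -- step 2: Hölder
    have step2 : eLpNorm (fun ω => K ω * ((⇑f - ⇑g) ω)) (ENNReal.ofReal s) μ ≤
        eLpNorm K q μ * eLpNorm (⇑f - ⇑g) (ENNReal.ofReal r) μ := by
      haveI : ENNReal.HolderTriple q (ENNReal.ofReal r) (ENNReal.ofReal s) :=
        ⟨by simpa only [one_div] using hpqr.symm⟩
      simpa using eLpNorm_le_eLpNorm_mul_eLpNorm'_of_norm hKm hFGm (· * ·) 1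
        (Filter.Eventually.of_forall fun ω => by rw [norm_mul, NNReal.coe_one, one_mul])
    -- step 3: bound the weight
    have step3 : eLpNorm K q μ ≤ ENNReal.ofReal (2 * P) := by
      have hsmul : K = (P : ℝ) • (fun ω => |f ω| ^ (P - 1) + |g ω| ^ (P - 1)) := by
        funext ω; simp [hKdef]
      rw [hsmul, eLpNorm_const_smul]
      have hadd : eLpNorm (fun ω => |f ω| ^ (P - 1) + |g ω| ^ (P - 1)) q μ ≤ 2 := by
        calc eLpNorm ((fun ω => |f ω| ^ (P - 1)) + fun ω => |g ω| ^ (P - 1)) q μ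
            ≤ eLpNorm (fun ω => |f ω| ^ (P - 1)) q μ
              + eLpNorm (fun ω => |g ω| ^ (P - 1)) q μ :=
              eLpNorm_add_le (hmes f) (hmes g) hq1
          _ ≤ 1 + 1 := add_le_add (hwt f hf) (hwt g hg)
          _ = 2 := by norm_num
      calc (‖(P : ℝ)‖₊ : ℝ≥0∞) * eLpNorm (fun ω => |f ω| ^ (P - 1) + |g ω| ^ (P - 1)) q μ
          ≤ (‖(P : ℝ)‖₊ : ℝ≥0∞) * 2 := by gcongr
        _ = ENNReal.ofReal P * 2 := by rw [← enorm_eq_nnnorm, Real.enorm_eq_ofReal (by linarith)]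
        _ = ENNReal.ofReal (2 * P) := by
            rw [ENNReal.ofReal_mul (by norm_num : (0:ℝ) ≤ 2), ENNReal.ofReal_ofNat]
            ring
    -- assemble
    calc edist (φ f) (φ g)
        = eLpNorm (⇑(φ f) - ⇑(φ g)) (ENNReal.ofReal s) μ := Lp.edist_def _ _
      _ ≤ eLpNorm K q μ * eLpNorm (⇑f - ⇑g) (ENNReal.ofReal r) μ := step1.trans step2
      _ ≤ ENNReal.ofReal (2 * P) * edist f g := by
          rw [Lp.edist_def]
          exact mul_le_mul_left step3 _
      _ = (Real.toNNReal (2 * P) : ℝ≥0∞) * edist f g := rfl
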